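/- Let n ≥ 3 and let A ∈ ℝ^{n×n} be symmetric. Then A satisfies condition (M) for the nonnegative orthant ℝ^n₊ := {x ∈ ℝ^n : x_i ≥ 0 for all i} if and only if there exists λ ∈ ℝ such that A = λ I_n. In particular, in this case the quadratic function f(x) = ⟨Ax,x⟩ is constant equal to λ on 𝕊 ∩ ℝ^n₊₊, where ℝ^n₊₊ := {x : x_i > 0 for all i}. -/

import Mathlib

open Matrix RealInnerProductSpace

/-- Condition (M): `⟨Ax,x⟩ ≥ ⟨Ay,y⟩` for all `x ∈ 𝕊` and `y ∈ K ∩ 𝕊` with `x ⊥ y`. -/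
def CondM {n : ℕ} (A : Matrix (Fin n) (Fin n) ℝ) (K : Set (EuclideanSpace ℝ (Fin n))) : Prop :=
  ∀ x y : EuclideanSpace ℝ (Fin n), ‖x‖ = 1 → y ∈ K → ‖y‖ = 1 → ⟪x, y⟫ = 0 →
    ⟪Matrix.toEuclideanLin A y, y⟫ ≤ ⟪Matrix.toEuclideanLin A x, x⟫

section Aux

variable {n : ℕ}

lemma quad_eq' (A : Matrix (Fin n) (Fin n) ℝ) (x : EuclideanSpace ℝ (Fin n)) :
    ⟪Matrix.toEuclideanLin A x, x⟫ = ∑ i, (∑ j, A i j * x j) * x i := by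
  simp [Matrix.toEuclideanLin_apply, PiLp.inner_apply, Matrix.mulVec, dotProduct]
  exact Finset.sum_congr rfl fun _ _ => mul_comm _ _

lemma quad_single' (A : Matrix (Fin n) (Fin n) ℝ) (i : Fin n) :
    ⟪Matrix.toEuclideanLin A (EuclideanSpace.single i 1),
      (EuclideanSpace.single i 1 : EuclideanSpace ℝ (Fin n))⟫ = A i i := by
  rw [quad_eq']
  simp [EuclideanSpace.single_apply]

lemma quad_two' (A : Matrix (Fin n) (Fin n) ℝ) (j k : Fin n) (a b : ℝ) :
    ⟪Matrix.toEuclideanLin A (a • EuclideanSpace.single j 1 + b • EuclideanSpace.single k 1),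
      (a • EuclideanSpace.single j 1 + b • EuclideanSpace.single k 1 : EuclideanSpace ℝ (Fin n))⟫
    = a*a*A j j + a*b*A j k + a*b*A k j + b*b*A k k := by
  rw [quad_eq']
  simp only [PiLp.add_apply, PiLp.smul_apply, EuclideanSpace.single_apply, smul_eq_mul,
    mul_ite, mul_one, mul_zero, mul_add, add_mul, Finset.sum_add_distrib, Finset.sum_ite_eq',
    Finset.mem_univ, if_true]
  ring

lemma norm_two' (j k : Fin n) (hjk : j ≠ k) (a b : ℝ) (hab : a^2 + b^2 = 1) :
    ‖(a • EuclideanSpace.single j 1 + b • EuclideanSpace.single k 1 :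
      EuclideanSpace ℝ (Fin n))‖ = 1 := by
  rw [EuclideanSpace.norm_eq]
  have : ∑ i, ‖(a • EuclideanSpace.single j 1 + b • EuclideanSpace.single k 1 :
      EuclideanSpace ℝ (Fin n)) i‖^2 = a^2 + b^2 := by
    simp only [PiLp.add_apply, PiLp.smul_apply, EuclideanSpace.single_apply, smul_eq_mul,
      mul_ite, mul_one, mul_zero, Real.norm_eq_abs, sq_abs]
    rw [Finset.sum_congr rfl (fun i _ => ?_ : ∀ i ∈ Finset.univ,
      ((if i = j then a else 0) + if i = k then b else 0)^2 =
      (if i = j then a^2 else 0) + (if i = k then b^2 else 0))]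
    · simp [Finset.sum_add_distrib]
    · split_ifs with h1 h2
      · exact absurd (h1 ▸ h2) hjk
      · ring
      · ring
      · ring
  rw [this, hab, Real.sqrt_one]

lemma orth_two' (i j k : Fin n) (hij : i ≠ j) (hik : i ≠ k) (a b : ℝ) :
    ⟪(a • EuclideanSpace.single j 1 + b • EuclideanSpace.single k 1 : EuclideanSpace ℝ (Fin n)),
      EuclideanSpace.single i 1⟫ = 0 := by
  simp [PiLp.inner_apply, PiLp.add_apply, PiLp.smul_apply, EuclideanSpace.single_apply,
    Finset.sum_ite_eq', hij, hik]

lemma orth_single' (i j : Fin n) (hij : i ≠ j) :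
    ⟪(EuclideanSpace.single j 1 : EuclideanSpace ℝ (Fin n)), EuclideanSpace.single i 1⟫ = 0 := by
  simp [PiLp.inner_apply, EuclideanSpace.single_apply, Finset.sum_ite_eq', hij, hij.symm]

lemma single_mem' (i : Fin n) :
    (EuclideanSpace.single i 1 : EuclideanSpace ℝ (Fin n)) ∈
      {x : EuclideanSpace ℝ (Fin n) | ∀ l, 0 ≤ x l} := by
  intro l
  simp only [EuclideanSpace.single_apply]
  split_ifs <;> norm_num

lemma norm_single' (i : Fin n) :
    ‖(EuclideanSpace.single i 1 : EuclideanSpace ℝ (Fin n))‖ = 1 := by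
  rw [EuclideanSpace.norm_single]
  simp

end Aux

/-- For `n ≥ 3` and symmetric `A`, condition (M) for the nonnegative orthant holds
iff `A = λ Iₙ` for some `λ ∈ ℝ`; in that case the quadratic form is constantly `λ`
on `𝕊 ∩ ℝⁿ₊₊`. -/
theorem quadratic_spherical_stmt11 (n : ℕ) (hn : 3 ≤ n)
    (A : Matrix (Fin n) (Fin n) ℝ) (hA : A.IsSymm) :
    (CondM A {x : EuclideanSpace ℝ (Fin n) | ∀ i, 0 ≤ x i} ↔
      ∃ lam : ℝ, A = lam • (1 : Matrix (Fin n) (Fin n) ℝ)) ∧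
    (∀ lam : ℝ, A = lam • (1 : Matrix (Fin n) (Fin n) ℝ) →
      ∀ x : EuclideanSpace ℝ (Fin n), ‖x‖ = 1 → (∀ i, 0 < x i) →
        ⟪Matrix.toEuclideanLin A x, x⟫ = lam) := by
  -- the constant quadratic form computation, used in both parts
  have hquad : ∀ lam : ℝ, A = lam • (1 : Matrix (Fin n) (Fin n) ℝ) →
      ∀ x : EuclideanSpace ℝ (Fin n), ‖x‖ = 1 →
        ⟪Matrix.toEuclideanLin A x, x⟫ = lam := by
    intro lam hAeq x hx
    rw [quad_eq']
    have h1 : ∀ i, (∑ j, A i j * x j) = lam * x i := by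
      intro i
      rw [hAeq]
      simp [Matrix.smul_apply, Matrix.one_apply, mul_ite, ite_mul, Finset.sum_ite_eq',
        mul_comm]
    calc ∑ i, (∑ j, A i j * x j) * x i = ∑ i, lam * (x i * x i) := by
          refine Finset.sum_congr rfl fun i _ => ?_
          rw [h1 i]; ring
      _ = lam * ∑ i, x i * x i := by rw [Finset.mul_sum]
      _ = lam * ⟪x, x⟫ := by rw [PiLp.inner_apply]; norm_num; left; exact Finset.sum_congr rfl fun _ _ => (sq _).symm
      _ = lam := by rw [real_inner_self_eq_norm_sq, hx]; norm_num
  constructor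
  · constructor
    · -- forward direction
      intro h
      refine ⟨A ⟨0, by omega⟩ ⟨0, by omega⟩, ?_⟩
      -- diagonal entries are all equal
      have hdle : ∀ i j : Fin n, i ≠ j → A i i ≤ A j j := by
        intro i j hij
        have := h (EuclideanSpace.single j 1) (EuclideanSpace.single i 1)
          (norm_single' j) (single_mem' i) (norm_single' i) (orth_single' i j hij)
        rwa [quad_single', quad_single'] at this
      have hdiag : ∀ i j : Fin n, A i i = A j j := by
        intro i j
        rcases eq_or_ne i j with rfl | hij
        · rfl
        · exact le_antisymm (hdle i j hij) (hdle j i hij.symm)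
      -- off-diagonal entries vanish
      have hoff : ∀ j k : Fin n, j ≠ k → A j k = 0 := by
        intro j k hjk
        -- find i distinct from j and k
        have hex : ∃ i : Fin n, i ≠ j ∧ i ≠ k := by
          by_contra hcon
          push_neg at hcon
          have hsub : (Finset.univ : Finset (Fin n)) ⊆ {j, k} := by
            intro i _
            rcases eq_or_ne i j with rfl | hij
            · simp
            · simp [hcon i hij]
          have := Finset.card_le_card hsub
          simp only [Finset.card_univ, Fintype.card_fin] at this
          have h2 : ({j, k} : Finset (Fin n)).card ≤ 2 :=
            (Finset.card_insert_le _ _).trans (by simp)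
          omega
        obtain ⟨i, hij, hik⟩ := hex
        set c : ℝ := (Real.sqrt 2)⁻¹ with hc
        have hc2 : c^2 = 1/2 := by
          rw [hc, inv_pow, Real.sq_sqrt (by norm_num : (0:ℝ) ≤ 2)]
          norm_num
        have hcc : c * c = 1/2 := by rw [← sq]; exact hc2
        have hab1 : c^2 + c^2 = 1 := by rw [hc2]; norm_num
        have hab2 : c^2 + (-c)^2 = 1 := by rw [neg_pow, hc2]; norm_num
        have hsym : A k j = A j k := by
          have := hA.apply k j
          simpa using this.symm
        -- apply condition (M) with x = c e_j + c e_k and x = c e_j - c e_k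
        have h1 := h (c • EuclideanSpace.single j 1 + c • EuclideanSpace.single k 1)
          (EuclideanSpace.single i 1) (norm_two' j k hjk c c hab1) (single_mem' i)
          (norm_single' i) (orth_two' i j k hij hik c c)
        have h2 := h (c • EuclideanSpace.single j 1 + (-c) • EuclideanSpace.single k 1)
          (EuclideanSpace.single i 1) (norm_two' j k hjk c (-c) hab2) (single_mem' i)
          (norm_single' i) (orth_two' i j k hij hik c (-c))
        rw [quad_single', quad_two'] at h1 h2
        have e1 : A j j = A i i := hdiag j i
        have e2 : A k k = A i i := hdiag k i
        rw [e1, e2, hsym] at h1 h2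
        simp only [mul_neg, neg_mul, neg_neg] at h1 h2
        rw [hcc] at h1 h2
        linarith
      ext i j
      rcases eq_or_ne i j with rfl | hij
      · simpa [Matrix.smul_apply, Matrix.one_apply] using hdiag i ⟨0, by omega⟩
      · simp [Matrix.smul_apply, Matrix.one_apply, hij, hoff i j hij]
    · -- backward direction
      rintro ⟨lam, hAeq⟩
      intro x y hx _ hy _
      rw [hquad lam hAeq x hx, hquad lam hAeq y hy]
  · intro lam hAeq x hx _
    exact hquad lam hAeq x hx
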